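/- The sum of the interior angles of a nondegenerate spherical triangle on the unit sphere is strictly greater than π (and strictly less than 3π). -/

import Mathlib

open scoped RealInnerProductSpace

/-- Interior angle of a spherical triangle at vertex `u`, between the sides
towards `v` and `w`. -/
noncomputable def sphAngle (u v w : EuclideanSpace ℝ (Fin 3)) : ℝ :=
  InnerProductGeometry.angle (v - ⟪u, v⟫ • u) (w - ⟪u, w⟫ • u)

open InnerProductGeometry Real

section Aux

variable {V : Type*} [NormedAddCommGroup V] [InnerProductSpace ℝ V]

lemma sph_indep_coeff {x y z : V} (h : LinearIndependent ℝ ![x, y, z]) :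
    ∀ a b c : ℝ, a • x + b • y + c • z = 0 → a = 0 ∧ b = 0 ∧ c = 0 := by
  intro a b c habc
  have h2 := Fintype.linearIndependent_iff.mp h ![a, b, c] (by
    simpa [Fin.sum_univ_three] using habc)
  exact ⟨h2 0, h2 1, h2 2⟩

lemma sph_indep_of_coeff {x y z : V}
    (h : ∀ a b c : ℝ, a • x + b • y + c • z = 0 → a = 0 ∧ b = 0 ∧ c = 0) :
    LinearIndependent ℝ ![x, y, z] := by
  refine Fintype.linearIndependent_iff.mpr fun g hg => ?_
  have := h (g 0) (g 1) (g 2) (by simpa [Fin.sum_univ_three] using hg)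
  intro i; fin_cases i <;> simp [this.1, this.2.1, this.2.2]

lemma sph_angle_eq_of_inner {W : Type*} [NormedAddCommGroup W] [InnerProductSpace ℝ W]
    {x y : V} {x' y' : W} (h1 : ⟪x, y⟫ = ⟪x', y'⟫) (h2 : ⟪x, x⟫ = ⟪x', x'⟫)
    (h3 : ⟪y, y⟫ = ⟪y', y'⟫) : angle x y = angle x' y' := by
  unfold angle
  rw [norm_eq_sqrt_real_inner x, norm_eq_sqrt_real_inner y,
    norm_eq_sqrt_real_inner x', norm_eq_sqrt_real_inner y', h1, h2, h3]

lemma sph_inner_proj_proj (u a b : V) (hu : ⟪u, u⟫ = (1:ℝ)) :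
    ⟪a - ⟪u, a⟫ • u, b - ⟪u, b⟫ • u⟫ = ⟪a, b⟫ - ⟪u, a⟫ * ⟪u, b⟫ := by
  have hau : ⟪a, u⟫ = ⟪u, a⟫ := (real_inner_comm a u).symm
  simp only [inner_sub_left, inner_sub_right, real_inner_smul_left, real_inner_smul_right,
    hu, hau]
  ring

lemma sph_key_unit {x y z : V} (hx : ‖x‖ = 1) (hy : ‖y‖ = 1) (hz : ‖z‖ = 1)
    (h : ∀ a b c : ℝ, a • x + b • y + c • z = 0 → a = 0 ∧ b = 0 ∧ c = 0) :
    Real.cos (angle y x + angle y z) < Real.cos (angle x z) := by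
  set a := ⟪y, x⟫ with ha
  set b := ⟪y, z⟫ with hb
  set x' := x - a • y with hx'def
  set z' := z - b • y with hz'def
  have hyy : ⟪y, y⟫ = 1 := by rw [real_inner_self_eq_norm_sq, hy]; norm_num
  have hxx : ⟪x, x⟫ = 1 := by rw [real_inner_self_eq_norm_sq, hx]; norm_num
  have hzz : ⟪z, z⟫ = 1 := by rw [real_inner_self_eq_norm_sq, hz]; norm_num
  have hxy : ⟪x, y⟫ = a := (real_inner_comm x y).symm
  have hzy : ⟪z, y⟫ = b := (real_inner_comm z y).symm
  have hxz' : ⟪x', z'⟫ = ⟪x, z⟫ - a * b := by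
    simp only [hx'def, hz'def, inner_sub_left, inner_sub_right, real_inner_smul_left,
      real_inner_smul_right, hyy, hxy, ← ha, ← hb]
    ring
  have hxx' : ⟪x', x'⟫ = 1 - a ^ 2 := by
    simp only [hx'def, inner_sub_left, inner_sub_right, real_inner_smul_left,
      real_inner_smul_right, hyy, hxx, hxy, ← ha]
    ring
  have hzz' : ⟪z', z'⟫ = 1 - b ^ 2 := by
    simp only [hz'def, inner_sub_left, inner_sub_right, real_inner_smul_left,
      real_inner_smul_right, hyy, hzz, hzy, ← hb]
    ring
  have hnx' : ‖x'‖ = Real.sqrt (1 - a ^ 2) := by rw [norm_eq_sqrt_real_inner, hxx']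
  have hnz' : ‖z'‖ = Real.sqrt (1 - b ^ 2) := by rw [norm_eq_sqrt_real_inner, hzz']
  have hcosa : Real.cos (angle y x) = a := by rw [cos_angle, hy, hx]; simp [ha]
  have hcosb : Real.cos (angle y z) = b := by rw [cos_angle, hy, hz]; simp [hb]
  have hsina : Real.sin (angle y x) = ‖x'‖ := by
    rw [Real.sin_eq_sqrt_one_sub_cos_sq (angle_nonneg y x) (angle_le_pi y x), hcosa, hnx']
  have hsinb : Real.sin (angle y z) = ‖z'‖ := by
    rw [Real.sin_eq_sqrt_one_sub_cos_sq (angle_nonneg y z) (angle_le_pi y z), hcosb, hnz']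
  have hcosg : Real.cos (angle x z) = ⟪x, z⟫ := by rw [cos_angle, hx, hz]; simp
  have hx'0 : x' ≠ 0 := by
    intro h0
    have hc : (1 : ℝ) • x + (-a) • y + (0 : ℝ) • z = 0 := by
      rw [hx'def] at h0
      rw [← h0]; module
    exact one_ne_zero (h 1 (-a) 0 hc).1
  have hne : ‖z'‖ • (-x') ≠ ‖x'‖ • z' := by
    intro heq
    have h3 : (-(‖z'‖)) • x + (‖z'‖ * a + ‖x'‖ * b) • y + (-(‖x'‖)) • z = 0 := by
      have : (-(‖z'‖)) • x + (‖z'‖ * a + ‖x'‖ * b) • y + (-(‖x'‖)) • z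
          = ‖z'‖ • (-x') - ‖x'‖ • z' := by rw [hx'def, hz'def]; module
      rw [this, heq, sub_self]
    have := (h _ _ _ h3).2.2
    have : ‖x'‖ = 0 := by linarith [this]
    exact hx'0 (norm_eq_zero.mp this)
  have hCS : ⟪-x', z'⟫ < ‖-x'‖ * ‖z'‖ := inner_lt_norm_mul_iff_real.mpr
    (by rw [norm_neg]; exact hne)
  rw [inner_neg_left, norm_neg] at hCS
  rw [Real.cos_add, hcosa, hcosb, hsina, hsinb, hcosg]
  linarith

lemma sph_key_general {x y z : V} (h : LinearIndependent ℝ ![x, y, z]) :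
    Real.cos (angle y x + angle y z) < Real.cos (angle x z) := by
  have hc := sph_indep_coeff h
  have hx0 : x ≠ 0 := by intro h0; exact one_ne_zero (hc 1 0 0 (by simp [h0])).1
  have hy0 : y ≠ 0 := by intro h0; exact one_ne_zero (hc 0 1 0 (by simp [h0])).2.1
  have hz0 : z ≠ 0 := by intro h0; exact one_ne_zero (hc 0 0 1 (by simp [h0])).2.2
  have hxp : (0:ℝ) < ‖x‖⁻¹ := inv_pos.mpr (norm_pos_iff.mpr hx0)
  have hyp : (0:ℝ) < ‖y‖⁻¹ := inv_pos.mpr (norm_pos_iff.mpr hy0)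
  have hzp : (0:ℝ) < ‖z‖⁻¹ := inv_pos.mpr (norm_pos_iff.mpr hz0)
  have e1 : angle y x = angle (‖y‖⁻¹ • y) (‖x‖⁻¹ • x) := by
    rw [angle_smul_left_of_pos _ _ hyp, angle_smul_right_of_pos _ _ hxp]
  have e2 : angle y z = angle (‖y‖⁻¹ • y) (‖z‖⁻¹ • z) := by
    rw [angle_smul_left_of_pos _ _ hyp, angle_smul_right_of_pos _ _ hzp]
  have e3 : angle x z = angle (‖x‖⁻¹ • x) (‖z‖⁻¹ • z) := by
    rw [angle_smul_left_of_pos _ _ hxp, angle_smul_right_of_pos _ _ hzp]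
  rw [e1, e2, e3]
  refine sph_key_unit (norm_smul_inv_norm hx0) (norm_smul_inv_norm hy0)
    (norm_smul_inv_norm hz0) ?_
  intro a b c habc
  have : (a * ‖x‖⁻¹) • x + (b * ‖y‖⁻¹) • y + (c * ‖z‖⁻¹) • z = 0 := by
    rw [← habc]; module
  obtain ⟨h1, h2, h3⟩ := hc _ _ _ this
  refine ⟨?_, ?_, ?_⟩
  · rcases mul_eq_zero.mp h1 with h | h; exact h; exact absurd h (ne_of_gt hxp)
  · rcases mul_eq_zero.mp h2 with h | h; exact h; exact absurd h (ne_of_gt hyp)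
  · rcases mul_eq_zero.mp h3 with h | h; exact h; exact absurd h (ne_of_gt hzp)

lemma sph_angle_sum_lt_two_pi {x y z : V} (h : LinearIndependent ℝ ![x, y, z]) :
    angle x y + angle y z + angle z x < 2 * π := by
  have hk := sph_key_general h
  rw [angle_comm y x] at hk
  rw [angle_comm z x]
  set α := angle x y
  set β := angle y z
  set γ := angle x z
  have hα0 := angle_nonneg x y
  have hβ0 := angle_nonneg y z
  have hγπ := angle_le_pi x z
  have hαπ := angle_le_pi x y
  have hβπ := angle_le_pi y z
  rcases le_or_gt (α + β) π with hle | hlt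
  · have : γ < α + β := by
      by_contra hge
      exact absurd (Real.cos_le_cos_of_nonneg_of_le_pi (by linarith) hγπ (not_lt.mp hge))
        (not_le.mpr hk)
    linarith
  · have : γ < 2 * π - (α + β) := by
      by_contra hge
      have := Real.cos_le_cos_of_nonneg_of_le_pi (by linarith) hγπ (not_lt.mp hge)
      rw [Real.cos_two_pi_sub] at this
      linarith
    linarith

end Aux

/-- The cross product on `EuclideanSpace ℝ (Fin 3)`. -/
noncomputable def cr (a b : EuclideanSpace ℝ (Fin 3)) : EuclideanSpace ℝ (Fin 3) :=
  (WithLp.equiv 2 (Fin 3 → ℝ)).symm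
    ![a 1 * b 2 - a 2 * b 1, a 2 * b 0 - a 0 * b 2, a 0 * b 1 - a 1 * b 0]

lemma inner_cr_cr (u a b : EuclideanSpace ℝ (Fin 3)) :
    ⟪cr u a, cr u b⟫ = ⟪a, b⟫ * ⟪u, u⟫ - ⟪u, a⟫ * ⟪u, b⟫ := by
  simp [cr, PiLp.inner_apply, Fin.sum_univ_three, RCLike.inner_apply, conj_trivial,
    EuclideanSpace.norm_sq_eq]
  ring

lemma inner_self_cr (u a : EuclideanSpace ℝ (Fin 3)) : ⟪u, cr u a⟫ = 0 := by
  simp [cr, PiLp.inner_apply, Fin.sum_univ_three, RCLike.inner_apply, conj_trivial]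
  ring

lemma inner_cr_right_self (u a : EuclideanSpace ℝ (Fin 3)) : ⟪u, cr a u⟫ = 0 := by
  simp [cr, PiLp.inner_apply, Fin.sum_univ_three, RCLike.inner_apply, conj_trivial]
  ring

lemma inner_cr_cyc (u a b : EuclideanSpace ℝ (Fin 3)) : ⟪u, cr a b⟫ = ⟪b, cr u a⟫ := by
  simp [cr, PiLp.inner_apply, Fin.sum_univ_three, RCLike.inner_apply, conj_trivial]
  ring

lemma cr_anticomm (a b : EuclideanSpace ℝ (Fin 3)) : cr a b = - cr b a := by
  ext i
  fin_cases i <;> simp [cr] <;> ring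

lemma sph_det_ne (u v w : EuclideanSpace ℝ (Fin 3)) (hind : LinearIndependent ℝ ![u, v, w]) :
    ⟪u, cr v w⟫ ≠ 0 := by
  set M : Matrix (Fin 3) (Fin 3) ℝ :=
    Matrix.of ![(fun j => u j), (fun j => v j), (fun j => w j)] with hM
  have hMind : LinearIndependent ℝ (fun i => M i) := by
    have h : (fun i => M i) = ![(fun j => u j), (fun j => v j), (fun j => w j)] := rfl
    rw [h]
    have := hind.map' (WithLp.linearEquiv 2 ℝ (Fin 3 → ℝ)).toLinearMap (LinearEquiv.ker _)
    have e : ![fun j => u.ofLp j, fun j => v.ofLp j, fun j => w.ofLp j]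
        = (WithLp.linearEquiv 2 ℝ (Fin 3 → ℝ)).toLinearMap ∘ ![u, v, w] := by
      ext i j; fin_cases i <;> rfl
    rw [e]; exact this
  have hdet : M.det ≠ 0 := by
    have := Matrix.linearIndependent_rows_iff_isUnit.mp hMind
    exact (Matrix.isUnit_iff_isUnit_det M).mp this |>.ne_zero
  have h2 : ⟪u, cr v w⟫ = M.det := by
    simp [hM, Matrix.det_fin_three, cr, PiLp.inner_apply, Fin.sum_univ_three,
      RCLike.inner_apply, conj_trivial]
    ring
  rw [h2]; exact hdet

open scoped RealInnerProductSpace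

lemma sphAngle_eq_cr (u v w : EuclideanSpace ℝ (Fin 3)) (hu : ‖u‖ = 1) :
    sphAngle u v w = InnerProductGeometry.angle (cr u v) (cr u w) := by
  have huu : ⟪u, u⟫ = (1:ℝ) := by rw [real_inner_self_eq_norm_sq, hu]; norm_num
  refine sph_angle_eq_of_inner ?_ ?_ ?_
  · rw [sph_inner_proj_proj u v w huu, inner_cr_cr, huu]; ring
  · rw [sph_inner_proj_proj u v v huu, inner_cr_cr, huu]; ring
  · rw [sph_inner_proj_proj u w w huu, inner_cr_cr, huu]; ring

/-- The sum of the interior angles of a nondegenerate spherical triangle on the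
unit sphere is strictly greater than `π` and strictly less than `3π`. -/
theorem spherical_angle_sum (u v w : EuclideanSpace ℝ (Fin 3))
    (hu : ‖u‖ = 1) (hv : ‖v‖ = 1) (hw : ‖w‖ = 1)
    (hind : LinearIndependent ℝ ![u, v, w]) :
    Real.pi < sphAngle u v w + sphAngle v u w + sphAngle w u v ∧
      sphAngle u v w + sphAngle v u w + sphAngle w u v < 3 * Real.pi := by
  set p := cr v w with hp
  set q := cr w u with hq
  set r := cr u v with hr
  have hd : ⟪u, p⟫ ≠ 0 := sph_det_ne u v w hind
  have hvq : ⟪v, q⟫ = ⟪u, p⟫ := inner_cr_cyc v w u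
  have hwr : ⟪w, r⟫ = ⟪u, p⟫ := by
    rw [hr, inner_cr_cyc w u v, ← hq, hvq]
  have huq : ⟪u, q⟫ = 0 := inner_cr_right_self u w
  have hur : ⟪u, r⟫ = 0 := inner_self_cr u v
  have hvp : ⟪v, p⟫ = 0 := inner_self_cr v w
  have hvr : ⟪v, r⟫ = 0 := inner_cr_right_self v u
  have hwp : ⟪w, p⟫ = 0 := inner_cr_right_self w v
  have hwq : ⟪w, q⟫ = 0 := inner_self_cr w u
  -- linear independence of p, q, r
  have hpqr : ∀ a b c : ℝ, a • p + b • q + c • r = 0 → a = 0 ∧ b = 0 ∧ c = 0 := by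
    intro a b c habc
    have key : ∀ t : EuclideanSpace ℝ (Fin 3),
        ⟪t, a • p + b • q + c • r⟫ = a * ⟪t, p⟫ + b * ⟪t, q⟫ + c * ⟪t, r⟫ := by
      intro t
      rw [inner_add_right, inner_add_right, real_inner_smul_right, real_inner_smul_right,
        real_inner_smul_right]
    have h1 : a * ⟪u, p⟫ = 0 := by
      have := key u; rw [habc, inner_zero_right, huq, hur] at this; linarith
    have h2 : b * ⟪u, p⟫ = 0 := by
      have := key v; rw [habc, inner_zero_right, hvp, hvq, hvr] at this; linarith
    have h3 : c * ⟪u, p⟫ = 0 := by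
      have := key w; rw [habc, inner_zero_right, hwp, hwq, hwr] at this; linarith
    exact ⟨by rcases mul_eq_zero.mp h1 with h | h; exact h; exact absurd h hd,
      by rcases mul_eq_zero.mp h2 with h | h; exact h; exact absurd h hd,
      by rcases mul_eq_zero.mp h3 with h | h; exact h; exact absurd h hd⟩
  have hqrp : LinearIndependent ℝ ![q, r, p] := by
    refine sph_indep_of_coeff fun a b c habc => ?_
    have := hpqr c a b (by rw [← habc]; module)
    exact ⟨this.2.1, this.2.2, this.1⟩
  -- express the three spherical angles
  open InnerProductGeometry in
  have hA : sphAngle u v w = Real.pi - angle q r := by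
    rw [sphAngle_eq_cr u v w hu, ← hr, cr_anticomm u w, ← hq, angle_neg_right, angle_comm]
  have hB : sphAngle v u w = Real.pi - angle r p := by
    rw [sphAngle_eq_cr v u w hv, cr_anticomm v u, ← hr, ← hp, angle_neg_left]
  have hC : sphAngle w u v = Real.pi - angle p q := by
    rw [sphAngle_eq_cr w u v hw, ← hq, cr_anticomm w v, ← hp, angle_neg_right, angle_comm]
  open InnerProductGeometry in
  have hsum_lt : angle q r + angle r p + angle p q < 2 * Real.pi :=
    sph_angle_sum_lt_two_pi hqrp
  open InnerProductGeometry in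
  have hqr_pos : 0 < angle q r := by
    rcases lt_or_eq_of_le (angle_nonneg q r) with h | h
    · exact h
    · exfalso
      obtain ⟨hq0, t, ht, hrt⟩ := angle_eq_zero_iff.mp h.symm
      have : (0:ℝ) • p + t • q + (-1 : ℝ) • r = 0 := by rw [hrt]; module
      have := (hpqr _ _ _ this).2.2
      norm_num at this
  open InnerProductGeometry in
  have hrp0 := angle_nonneg r p
  open InnerProductGeometry in
  have hpq0 := angle_nonneg p q
  rw [hA, hB, hC]
  constructor <;> linarith
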